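/- Let A : ℝ → ℝ be smooth and let 𝔄 : ℝ → ℝ be smooth with 𝔄′ = A. Then for every smooth solution u : ℝ × ℝ → ℝ of the equation u_t = (A(u)u_x)_x + u_x (the case B = 1, f = 1, h = 1), both pairs F₁ = u, G₁ = −A(u)u_x − u and F₂ = (x+t)u, G₂ = −(x+t)(A(u)u_x + u) + 𝔄(u) satisfy the conservation-law identity ∂_t F + ∂_x G = 0 at every point of ℝ × ℝ. -/

import Mathlib

open Set Real
open scoped ContDiff

/-- For the equation `u_t = (A(u) u_x)_x + u_x` (the case `B = 1`, `f = 1`,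
`h = 1`), both pairs `F₁ = u`, `G₁ = -A(u) u_x - u` and `F₂ = (x+t) u`,
`G₂ = -(x+t)(A(u) u_x + u) + 𝔄(u)` (where `𝔄' = A`) are conserved vectors. -/
theorem conservation_laws_case_B_one_f_one_h_one
    (A FA : ℝ → ℝ) (hA : ContDiff ℝ ∞ A)
    (hFA : ContDiff ℝ ∞ FA) (hFA' : ∀ v : ℝ, HasDerivAt FA (A v) v)
    (u : ℝ → ℝ → ℝ)
    (hu : ContDiff ℝ ∞ (fun p : ℝ × ℝ => u p.1 p.2))
    (hpde : ∀ t x : ℝ,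
      deriv (fun s => u s x) t
        = deriv (fun y => A (u t y) * deriv (fun z => u t z) y) x
          + deriv (fun y => u t y) x) :
    ∀ t x : ℝ,
      (deriv (fun s => u s x) t
        + deriv (fun y =>
            -(A (u t y) * deriv (fun z => u t z) y) - u t y) x = 0)
      ∧ (deriv (fun s => (x + s) * u s x) t
        + deriv (fun y =>
            -((y + t) * (A (u t y) * deriv (fun z => u t z) y + u t y))
              + FA (u t y)) x = 0) := by
  intro t x
  -- smoothness of slices
  have hux : ContDiff ℝ ∞ (fun y => u t y) := by
    have : ContDiff ℝ ∞ (fun y : ℝ => ((t, y) : ℝ × ℝ)) :=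
      (contDiff_const).prodMk contDiff_id
    exact hu.comp this
  have hut : ContDiff ℝ ∞ (fun s => u s x) := by
    have : ContDiff ℝ ∞ (fun s : ℝ => ((s, x) : ℝ × ℝ)) :=
      contDiff_id.prodMk contDiff_const
    exact hu.comp this
  have hux' : ContDiff ℝ ∞ (deriv fun y => u t y) :=
    (contDiff_infty_iff_deriv.mp hux).2
  -- g = A(u) u_x, smooth in y
  set g : ℝ → ℝ := fun y => A (u t y) * deriv (fun z => u t z) y with hg
  have hgsmooth : ContDiff ℝ ∞ g := (hA.comp hux).mul hux'
  have hgdiff : DifferentiableAt ℝ g x := (hgsmooth.differentiable (by simp)) x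
  have hgd : HasDerivAt g (deriv g x) x := hgdiff.hasDerivAt
  have huxd : HasDerivAt (fun y => u t y) (deriv (fun y => u t y) x) x :=
    ((hux.differentiable (by simp)) x).hasDerivAt
  have hutd : HasDerivAt (fun s => u s x) (deriv (fun s => u s x) t) t :=
    ((hut.differentiable (by simp)) t).hasDerivAt
  have hpde' : deriv (fun s => u s x) t = deriv g x + deriv (fun y => u t y) x := hpde t x
  constructor
  · -- first conservation law
    have h1 : HasDerivAt (fun y => -(g y) - u t y)
        (-(deriv g x) - deriv (fun y => u t y) x) x := hgd.neg.sub huxd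
    have : deriv (fun y => -(g y) - u t y) x
        = -(deriv g x) - deriv (fun y => u t y) x := h1.deriv
    rw [this, hpde']
    ring
  · -- second conservation law
    -- t-derivative of (x+s) u s x
    have hT : HasDerivAt (fun s => (x + s) * u s x)
        ((0 + 1) * u t x + (x + t) * deriv (fun s => u s x) t) t :=
      ((hasDerivAt_const t x).add (hasDerivAt_id t)).mul hutd
    -- x-derivative of the flux
    have hFAu : HasDerivAt (fun y => FA (u t y))
        (A (u t x) * deriv (fun y => u t y) x) x :=
      (hFA' (u t x)).comp x huxd
    have hG : HasDerivAt (fun y => -((y + t) * (g y + u t y)) + FA (u t y))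
        (-((1 + 0) * (g x + u t x) + (x + t) * (deriv g x + deriv (fun y => u t y) x))
          + A (u t x) * deriv (fun y => u t y) x) x :=
      ((((hasDerivAt_id x).add (hasDerivAt_const x t)).mul (hgd.add huxd)).neg).add hFAu
    rw [hT.deriv, hG.deriv, hpde', hg]
    ring
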